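/- arXiv:1909.02981 — 3 statements merged into one kernel-verified Lean document; each statement's English description precedes it below -/
import Mathlib

section
/- Let ρ be a bounded self-adjoint operator and D a bounded operator on a complex Hilbert space h, and let c be a nonzero real number such that ρD = c Dρ. Then: (i) ρ commutes with DD* and with D*D; (ii) ker D and (ker D)^⊥ are invariant under ρ, and consequently ρ commutes with the orthogonal projection onto ker D (and likewise with the orthogonal projection onto ker D*). -/
open ContinuousLinearMap

noncomputable section

/-- A self-adjoint operator preserving a submodule also preserves its orthogonal complement. -/
lemma sa_preserves_ortho {h : Type*} [NormedAddCommGroup h] [InnerProductSpace ℂ h]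
    [CompleteSpace h] (ρ : h →L[ℂ] h) (hρ : IsSelfAdjoint ρ) (K : Submodule ℂ h)
    (hK : ∀ x ∈ K, ρ x ∈ K) : ∀ x ∈ Kᗮ, ρ x ∈ Kᗮ := by
  intro x hx u hu
  have : inner ℂ u (ρ x) = inner ℂ (ρ u) x := by
    rw [← ContinuousLinearMap.adjoint_inner_left, hρ.adjoint_eq]
  rw [this]
  exact (Submodule.mem_orthogonal K x).mp hx (ρ u) (hK u hu)

/-- A self-adjoint operator preserving a submodule and its complement commutes with every
self-adjoint idempotent with range that submodule. -/
lemma commutes_with_proj {h : Type*} [NormedAddCommGroup h] [InnerProductSpace ℂ h]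
    [CompleteSpace h] (ρ : h →L[ℂ] h) (hρ : IsSelfAdjoint ρ) (K : Submodule ℂ h)
    (hK : ∀ x ∈ K, ρ x ∈ K) (Pk : h →L[ℂ] h) (hsa : IsSelfAdjoint Pk)
    (hidem : Pk * Pk = Pk) (hrange : LinearMap.range (Pk : h →ₗ[ℂ] h) = K) : ρ * Pk = Pk * ρ := by
  have hfix : ∀ z ∈ K, Pk z = z := by
    intro z hz
    rw [← hrange] at hz
    obtain ⟨w, rfl⟩ := hz
    have := congrArg (fun A => A w) hidem
    simpa using this
  have hkill : ∀ z ∈ Kᗮ, Pk z = 0 := by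
    intro z hz
    have hinner : inner ℂ (Pk z) (Pk z) = (0 : ℂ) := by
      have h1 : inner ℂ (Pk z) (Pk z) = inner ℂ (Pk (Pk z)) z := by
        rw [← ContinuousLinearMap.adjoint_inner_left, hsa.adjoint_eq]
      have h2 : Pk (Pk z) = Pk z := by
        have := congrArg (fun A => A z) hidem
        simpa using this
      rw [h1, h2]
      have hPz : Pk z ∈ K := by rw [← hrange]; exact ⟨z, rfl⟩
      exact (Submodule.mem_orthogonal K z).mp hz (Pk z) hPz
    exact inner_self_eq_zero.mp hinner
  ext x
  have hdecomp : x - Pk x ∈ Kᗮ := by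
    intro u hu
    rw [← hrange] at hu
    obtain ⟨w, rfl⟩ := hu
    have : inner ℂ (Pk w) (x - Pk x) = inner ℂ w (Pk (x - Pk x)) := by
      rw [← ContinuousLinearMap.adjoint_inner_left, hsa.adjoint_eq]
    rw [ContinuousLinearMap.coe_coe, this]
    have h2 : Pk (Pk x) = Pk x := by
      have := congrArg (fun A => A x) hidem
      simpa using this
    simp [map_sub, h2]
  have hρx : ρ (Pk x) ∈ K := hK _ (by rw [← hrange]; exact ⟨x, rfl⟩)
  have hρx' : ρ (x - Pk x) ∈ Kᗮ := sa_preserves_ortho ρ hρ K hK _ hdecomp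
  have key : Pk (ρ x) = ρ (Pk x) := by
    have : ρ x = ρ (Pk x) + ρ (x - Pk x) := by rw [← map_add]; congr 1; abel
    rw [this, map_add, hfix _ hρx, hkill _ hρx', add_zero]
  simp only [ContinuousLinearMap.mul_apply]
  rw [key]

/-- If `ρ` is a bounded self-adjoint operator, `D` a bounded operator on a complex Hilbert
space, and `c ≠ 0` a real number with `ρD = c Dρ`, then: (i) `ρ` commutes with `DD⋆` and with
`D⋆D`; (ii) `ker D` and `(ker D)^⊥` are invariant under `ρ`, and `ρ` commutes with every
orthogonal projection onto `ker D` (i.e. every self-adjoint idempotent with range `ker D`),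
and likewise for `ker D⋆`. -/
theorem commutes_of_local_detailed_balance
    {h : Type*} [NormedAddCommGroup h] [InnerProductSpace ℂ h] [CompleteSpace h]
    (ρ D : h →L[ℂ] h) (hρ : IsSelfAdjoint ρ) (c : ℝ) (hc : c ≠ 0)
    (hdb : ρ * D = ((c : ℝ) : ℂ) • (D * ρ)) :
    ρ * (D * adjoint D) = (D * adjoint D) * ρ ∧
    ρ * (adjoint D * D) = (adjoint D * D) * ρ ∧
    (∀ x ∈ LinearMap.ker (D : h →ₗ[ℂ] h), ρ x ∈ LinearMap.ker (D : h →ₗ[ℂ] h)) ∧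
    (∀ x ∈ (LinearMap.ker (D : h →ₗ[ℂ] h) : Submodule ℂ h)ᗮ, ρ x ∈ (LinearMap.ker (D : h →ₗ[ℂ] h) : Submodule ℂ h)ᗮ) ∧
    (∀ Pk : h →L[ℂ] h, IsSelfAdjoint Pk → Pk * Pk = Pk →
      LinearMap.range (Pk : h →ₗ[ℂ] h) = LinearMap.ker (D : h →ₗ[ℂ] h) → ρ * Pk = Pk * ρ) ∧
    (∀ Pk : h →L[ℂ] h, IsSelfAdjoint Pk → Pk * Pk = Pk →
      LinearMap.range (Pk : h →ₗ[ℂ] h) = LinearMap.ker ((adjoint D : h →L[ℂ] h) : h →ₗ[ℂ] h) → ρ * Pk = Pk * ρ) := by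
  have hc' : ((c : ℝ) : ℂ) ≠ 0 := by exact_mod_cast hc
  -- adjoint of hdb : D⋆ρ = c ρD⋆
  have hadj : adjoint D * ρ = ((c : ℝ) : ℂ) • (ρ * adjoint D) := by
    have := congrArg star hdb
    rw [star_mul, star_smul, star_mul] at this
    simp only [star_eq_adjoint, hρ.adjoint_eq] at this
    simpa [Complex.star_def, Complex.conj_ofReal] using this
  -- Dρ = c⁻¹ ρD and ρD⋆ = c⁻¹ D⋆ρ
  have hDρ : D * ρ = (((c : ℝ) : ℂ))⁻¹ • (ρ * D) := by
    rw [hdb, smul_smul, inv_mul_cancel₀ hc', one_smul]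
  have hρDs : ρ * adjoint D = (((c : ℝ) : ℂ))⁻¹ • (adjoint D * ρ) := by
    rw [hadj, smul_smul, inv_mul_cancel₀ hc', one_smul]
  have h1 : ρ * (D * adjoint D) = (D * adjoint D) * ρ := by
    calc ρ * (D * adjoint D) = (ρ * D) * adjoint D := by rw [mul_assoc]
      _ = (((c : ℝ) : ℂ) • (D * ρ)) * adjoint D := by rw [hdb]
      _ = ((c : ℝ) : ℂ) • (D * (ρ * adjoint D)) := by rw [smul_mul_assoc, mul_assoc]
      _ = ((c : ℝ) : ℂ) • (D * ((((c : ℝ) : ℂ))⁻¹ • (adjoint D * ρ))) := by rw [hρDs]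
      _ = (D * adjoint D) * ρ := by
          rw [mul_smul_comm, smul_smul, mul_inv_cancel₀ hc', one_smul, mul_assoc]
  have h2 : ρ * (adjoint D * D) = (adjoint D * D) * ρ := by
    calc ρ * (adjoint D * D) = (ρ * adjoint D) * D := by rw [mul_assoc]
      _ = ((((c : ℝ) : ℂ))⁻¹ • (adjoint D * ρ)) * D := by rw [hρDs]
      _ = (((c : ℝ) : ℂ))⁻¹ • (adjoint D * (ρ * D)) := by rw [smul_mul_assoc, mul_assoc]
      _ = (((c : ℝ) : ℂ))⁻¹ • (adjoint D * (((c : ℝ) : ℂ) • (D * ρ))) := by rw [hdb]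
      _ = (adjoint D * D) * ρ := by
          rw [mul_smul_comm, smul_smul, inv_mul_cancel₀ hc', one_smul, mul_assoc]
  have hker : ∀ x ∈ LinearMap.ker (D : h →ₗ[ℂ] h), ρ x ∈ LinearMap.ker (D : h →ₗ[ℂ] h) := by
    intro x hx
    have hx0 : D x = 0 := hx
    have := congrArg (fun A => A x) hDρ
    simp only [ContinuousLinearMap.mul_apply, ContinuousLinearMap.smul_apply] at this
    simp only [LinearMap.mem_ker, ContinuousLinearMap.coe_coe]
    rw [this, hx0]
    simp
  have hkeradj : ∀ x ∈ LinearMap.ker ((adjoint D : h →L[ℂ] h) : h →ₗ[ℂ] h), ρ x ∈ LinearMap.ker ((adjoint D : h →L[ℂ] h) : h →ₗ[ℂ] h) := by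
    intro x hx
    have hx0 : adjoint D x = 0 := hx
    have h3 := congrArg (fun A => A x) hadj
    simp only [ContinuousLinearMap.mul_apply, ContinuousLinearMap.smul_apply] at h3
    simp only [LinearMap.mem_ker, ContinuousLinearMap.coe_coe]
    rw [h3, hx0]
    simp
  refine ⟨h1, h2, hker, sa_preserves_ortho ρ hρ _ hker, ?_, ?_⟩
  · exact fun Pk hsa hidem hrange => commutes_with_proj ρ hρ _ hker Pk hsa hidem hrange
  · exact fun Pk hsa hidem hrange => commutes_with_proj ρ hρ _ hkeradj Pk hsa hidem hrange
end
end

section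
/- Let D be a linear operator on ℂ^d, let Γ_−, Γ_+ > 0, ζ_−, ζ_+ ∈ ℝ, set Δ := ζ_− D*D + ζ_+ DD*, and define ℒ_*(ρ) := −(Γ_−/2)(D*Dρ + ρD*D) + Γ_+ D*ρD − (Γ_+/2)(DD*ρ + ρDD*) + Γ_− DρD* − i(Δρ − ρΔ). If ρ is a self-adjoint operator satisfying the detailed balance relation ρD = (Γ_−/Γ_+) D ρ, then ℒ_*(ρ) = 0. Moreover, if in addition Γ_− ≠ Γ_+, then tr(ρD) = 0. -/
open ContinuousLinearMap

noncomputable section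
set_option maxHeartbeats 1000000

/-- If `ρ` is a self-adjoint operator on `ℂ^d` satisfying the detailed balance relation
`ρD = (Γ₋/Γ₊) Dρ` for the single-frequency WCLT predual generator
`ℒ_*(ρ) = −(Γ₋/2){D⋆D, ρ} + Γ₊ D⋆ρD − (Γ₊/2){DD⋆, ρ} + Γ₋ DρD⋆ − i[Δ, ρ]`,
`Δ = ζ₋ D⋆D + ζ₊ DD⋆`, then `ℒ_*(ρ) = 0`; if moreover `Γ₋ ≠ Γ₊` then `tr(ρD) = 0`. -/
theorem detailed_balance_invariant
    (d : ℕ) (D : EuclideanSpace ℂ (Fin d) →L[ℂ] EuclideanSpace ℂ (Fin d))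
    (Γm Γp : ℝ) (hΓm : 0 < Γm) (hΓp : 0 < Γp) (ζm ζp : ℝ)
    (ρ : EuclideanSpace ℂ (Fin d) →L[ℂ] EuclideanSpace ℂ (Fin d)) (hρ : IsSelfAdjoint ρ)
    (hdb : ρ * D = ((Γm / Γp : ℝ) : ℂ) • (D * ρ)) :
    (-((Γm / 2 : ℝ) : ℂ) • (adjoint D * D * ρ + ρ * (adjoint D * D))
      + ((Γp : ℝ) : ℂ) • (adjoint D * ρ * D)
      - ((Γp / 2 : ℝ) : ℂ) • (D * adjoint D * ρ + ρ * (D * adjoint D))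
      + ((Γm : ℝ) : ℂ) • (D * ρ * adjoint D)
      - Complex.I • ((((ζm : ℂ) • (adjoint D * D) + (ζp : ℂ) • (D * adjoint D)) * ρ)
          - ρ * ((ζm : ℂ) • (adjoint D * D) + (ζp : ℂ) • (D * adjoint D))) = 0) ∧
    (Γm ≠ Γp → LinearMap.trace ℂ (EuclideanSpace ℂ (Fin d)) ↑(ρ * D) = 0) := by
  set c : ℂ := ((Γm / Γp : ℝ) : ℂ) with hc_def
  have hΓm' : (Γm : ℂ) ≠ 0 := by exact_mod_cast hΓm.ne'
  have hΓp' : (Γp : ℂ) ≠ 0 := by exact_mod_cast hΓp.ne'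
  have hc0 : c ≠ 0 := by
    simp [hc_def, Complex.ofReal_div, div_eq_mul_inv, hΓm', hΓp']
  -- adjoint relation
  have hA : adjoint D * ρ = c • (ρ * adjoint D) := by
    have := congrArg star hdb
    simpa [star_smul, hρ.star_eq, ← star_eq_adjoint, mul_smul_comm, smul_mul_assoc,
      hc_def, Complex.conj_ofReal] using this
  have hDρ : D * ρ = c⁻¹ • (ρ * D) := by
    rw [hdb, smul_smul, inv_mul_cancel₀ hc0, one_smul]
  have hρA : ρ * adjoint D = c⁻¹ • (adjoint D * ρ) := by
    rw [hA, smul_smul, inv_mul_cancel₀ hc0, one_smul]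
  have e1 : adjoint D * D * ρ = c⁻¹ • (adjoint D * ρ * D) := by
    rw [mul_assoc, hDρ, mul_smul_comm, mul_assoc]
  have e2 : ρ * (adjoint D * D) = c⁻¹ • (adjoint D * ρ * D) := by
    rw [← mul_assoc, hρA, smul_mul_assoc]
  have e3 : D * adjoint D * ρ = c • (D * ρ * adjoint D) := by
    rw [mul_assoc, hA, mul_smul_comm, mul_assoc]
  have e4 : ρ * (D * adjoint D) = c • (D * ρ * adjoint D) := by
    rw [← mul_assoc, hdb, smul_mul_assoc]
  have key1 : ((Γm : ℂ)) * c⁻¹ = (Γp : ℂ) := by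
    rw [hc_def]
    push_cast
    field_simp
  have key2 : ((Γp : ℂ)) * c = (Γm : ℂ) := by
    rw [hc_def]
    push_cast
    field_simp
  constructor
  · have e2' : ρ * adjoint D * D = c⁻¹ • (adjoint D * ρ * D) := by
      rw [hρA, smul_mul_assoc]
    have e4' : ρ * D * adjoint D = c • (D * ρ * adjoint D) := by
      rw [hdb, smul_mul_assoc]
    simp only [add_mul, mul_add, smul_mul_assoc, mul_smul_comm]
    rw [e1, e2, e3, e4]
    simp only [hc_def]
    have hΓm0 : (Γm:ℂ) ≠ 0 := hΓm'
    have hΓp0 : (Γp:ℂ) ≠ 0 := hΓp'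
    push_cast
    match_scalars <;> field_simp <;> ring
  · intro hne
    have htr : LinearMap.trace ℂ (EuclideanSpace ℂ (Fin d)) ↑(ρ * D)
        = c * LinearMap.trace ℂ (EuclideanSpace ℂ (Fin d)) ↑(ρ * D) := by
      conv_lhs => rw [hdb]
      rw [ContinuousLinearMap.coe_smul, map_smul, smul_eq_mul]
      congr 1
      rw [ContinuousLinearMap.mul_def, ContinuousLinearMap.mul_def,
        ContinuousLinearMap.toLinearMap_comp, ContinuousLinearMap.toLinearMap_comp,
        ← Module.End.mul_eq_comp, ← Module.End.mul_eq_comp, LinearMap.trace_mul_comm]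
    have hc1 : c ≠ 1 := by
      simp only [hc_def, Ne, Complex.ofReal_eq_one]
      rw [div_eq_one_iff_eq hΓp.ne']
      exact fun h => hne (by exact_mod_cast h)
    have := sub_eq_zero.mpr htr.symm
    rw [show c * LinearMap.trace ℂ (EuclideanSpace ℂ (Fin d)) ↑(ρ * D)
        - LinearMap.trace ℂ (EuclideanSpace ℂ (Fin d)) ↑(ρ * D)
        = (c - 1) * LinearMap.trace ℂ (EuclideanSpace ℂ (Fin d)) ↑(ρ * D) by ring] at this
    rcases mul_eq_zero.mp this with h | h
    · exact absurd (sub_eq_zero.mp h) hc1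
    · exact h
end
end

section
/- Let H = Σ_m ε_m P_m be a self-adjoint operator on ℂ^d with distinct real eigenvalues ε_m and spectral projections P_m (pairwise orthogonal, summing to the identity), let D be a linear operator on ℂ^d, and for each Bohr frequency ω ∈ B_+ := {ε_n − ε_m > 0} set D_ω := Σ_{(n,m): ε_n − ε_m = ω} P_m D P_n. Then the orthogonal projection onto the interaction-free subspace W_D := ∩_{ω∈B_+}(ker D_ω ∩ ker D_ω*) commutes with every spectral projection P_m, and hence commutes with H. -/
open ContinuousLinearMap Finset
open scoped Classical

noncomputable section

namespace WCLT7

variable {d : ℕ} {ι : Type*} [Fintype ι]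

/-- the Kraus operator `D_ω = Σ_{(n,m) : ε n − ε m = ω} P m D P n` -/
def Dw (ε : ι → ℝ) (P : ι → (EuclideanSpace ℂ (Fin d) →L[ℂ] EuclideanSpace ℂ (Fin d)))
    (D : EuclideanSpace ℂ (Fin d) →L[ℂ] EuclideanSpace ℂ (Fin d)) (ω : ℝ) :
    EuclideanSpace ℂ (Fin d) →L[ℂ] EuclideanSpace ℂ (Fin d) :=
  ∑ p : ι × ι, if ε p.1 - ε p.2 = ω then P p.2 * D * P p.1 else 0

/-- the (finite) set of Bohr frequencies `B₊ = {ε n − ε m > 0}` -/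
def Bohr (ε : ι → ℝ) : Finset ℝ :=
  (univ.filter fun p : ι × ι => 0 < ε p.1 - ε p.2).image fun p => ε p.1 - ε p.2

/-- the interaction-free subspace `W_D = ∩_{ω ∈ B₊} (ker D_ω ∩ ker D_ω⋆)` -/
def WD (ε : ι → ℝ) (P : ι → (EuclideanSpace ℂ (Fin d) →L[ℂ] EuclideanSpace ℂ (Fin d)))
    (D : EuclideanSpace ℂ (Fin d) →L[ℂ] EuclideanSpace ℂ (Fin d)) :
    Submodule ℂ (EuclideanSpace ℂ (Fin d)) :=
  ⨅ ω ∈ Bohr ε, (LinearMap.ker ((Dw ε P D ω : EuclideanSpace ℂ (Fin d) →ₗ[ℂ] EuclideanSpace ℂ (Fin d))) ⊓ LinearMap.ker ((adjoint (Dw ε P D ω) : EuclideanSpace ℂ (Fin d) →ₗ[ℂ] EuclideanSpace ℂ (Fin d))))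

/-- orthogonal projection onto a subspace, as an operator -/
def projOp (U : Submodule ℂ (EuclideanSpace ℂ (Fin d))) :
    EuclideanSpace ℂ (Fin d) →L[ℂ] EuclideanSpace ℂ (Fin d) :=
  U.subtypeL ∘L U.orthogonalProjectionOnto

section aux

variable (ε : ι → ℝ) (P : ι → (EuclideanSpace ℂ (Fin d) →L[ℂ] EuclideanSpace ℂ (Fin d)))
    (D : EuclideanSpace ℂ (Fin d) →L[ℂ] EuclideanSpace ℂ (Fin d))

lemma Dw_mul_P (hidem : ∀ m, P m * P m = P m)
    (horth : ∀ n m, n ≠ m → P n * P m = 0) (m : ι) (ω : ℝ) :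
    Dw ε P D ω * P m = ∑ k, if ε m - ε k = ω then P k * D * P m else 0 := by
  unfold Dw
  rw [Finset.sum_mul]
  have h1 : ∀ n k : ι, (if ε n - ε k = ω then P k * D * P n else 0) * P m
      = if n = m ∧ ε m - ε k = ω then P k * D * P m else 0 := by
    intro n k
    by_cases hnm : n = m
    · subst hnm
      by_cases hc : ε n - ε k = ω
      · simp [hc, mul_assoc, hidem n]
      · simp [hc]
    · by_cases hc : ε n - ε k = ω
      · simp only [hc, if_true, hnm, false_and, if_false, mul_assoc, horth n m hnm,
          mul_zero]
      · simp [hc, hnm]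
  calc ∑ p : ι × ι, (if ε p.1 - ε p.2 = ω then P p.2 * D * P p.1 else 0) * P m
      = ∑ p : ι × ι, if p.1 = m ∧ ε m - ε p.2 = ω then P p.2 * D * P m else 0 :=
        Finset.sum_congr rfl fun p _ => h1 p.1 p.2
    _ = ∑ k, if ε m - ε k = ω then P k * D * P m else 0 := by
        rw [Fintype.sum_prod_type, Finset.sum_comm]
        simp [ite_and, Finset.sum_ite_eq']

lemma P_mul_Dw (hidem : ∀ m, P m * P m = P m)
    (horth : ∀ n m, n ≠ m → P n * P m = 0) (m : ι) (ω : ℝ) :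
    P m * Dw ε P D ω = ∑ n, if ε n - ε m = ω then P m * D * P n else 0 := by
  unfold Dw
  rw [Finset.mul_sum]
  have h1 : ∀ n k : ι, P m * (if ε n - ε k = ω then P k * D * P n else 0)
      = if k = m ∧ ε n - ε m = ω then P m * D * P n else 0 := by
    intro n k
    by_cases hkm : k = m
    · subst hkm
      by_cases hc : ε n - ε k = ω
      · simp [hc, ← mul_assoc, hidem k]
      · simp [hc]
    · by_cases hc : ε n - ε k = ω
      · simp only [hc, if_true, hkm, false_and, if_false, ← mul_assoc, horth m k (Ne.symm hkm),
          zero_mul]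
      · simp [hc, hkm]
  calc ∑ p : ι × ι, P m * (if ε p.1 - ε p.2 = ω then P p.2 * D * P p.1 else 0)
      = ∑ p : ι × ι, if p.2 = m ∧ ε p.1 - ε m = ω then P m * D * P p.1 else 0 :=
        Finset.sum_congr rfl fun p _ => h1 p.1 p.2
    _ = ∑ n, if ε n - ε m = ω then P m * D * P n else 0 := by
        rw [Fintype.sum_prod_type]
        simp [ite_and, Finset.sum_ite_eq']

lemma S_mul_Dw (hε : Function.Injective ε) (hidem : ∀ m, P m * P m = P m)
    (horth : ∀ n m, n ≠ m → P n * P m = 0) (m : ι) (ω : ℝ) :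
    (∑ k, if ε m - ε k = ω then P k else 0) * Dw ε P D ω = Dw ε P D ω * P m := by
  rw [Dw_mul_P ε P D hidem horth m ω, Finset.sum_mul]
  refine Finset.sum_congr rfl fun k _ => ?_
  by_cases hc : ε m - ε k = ω
  · rw [if_pos hc, if_pos hc, P_mul_Dw ε P D hidem horth k ω]
    rw [Finset.sum_eq_single m]
    · rw [if_pos hc]
    · intro n _ hnm
      rw [if_neg]
      intro h
      exact hnm (hε (by linarith))
    · simp
  · rw [if_neg hc, if_neg hc, zero_mul]

lemma Dw_mul_S (hε : Function.Injective ε) (hidem : ∀ m, P m * P m = P m)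
    (horth : ∀ n m, n ≠ m → P n * P m = 0) (m : ι) (ω : ℝ) :
    Dw ε P D ω * (∑ n, if ε n - ε m = ω then P n else 0) = P m * Dw ε P D ω := by
  rw [P_mul_Dw ε P D hidem horth m ω, Finset.mul_sum]
  refine Finset.sum_congr rfl fun n _ => ?_
  by_cases hc : ε n - ε m = ω
  · rw [if_pos hc, if_pos hc, Dw_mul_P ε P D hidem horth n ω]
    rw [Finset.sum_eq_single m]
    · rw [if_pos hc]
    · intro k _ hkm
      rw [if_neg]
      intro h
      exact hkm (hε (by linarith))
    · simp
  · rw [if_neg hc, if_neg hc, mul_zero]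

end aux

lemma projOp_comm (U : Submodule ℂ (EuclideanSpace ℂ (Fin d)))
    (T : EuclideanSpace ℂ (Fin d) →L[ℂ] EuclideanSpace ℂ (Fin d))
    (hT : IsSelfAdjoint T) (hU : ∀ x ∈ U, T x ∈ U) :
    projOp U * T = T * projOp U := by
  have hadj : ContinuousLinearMap.adjoint T = T := ContinuousLinearMap.isSelfAdjoint_iff'.mp hT
  have hU' : ∀ x ∈ Uᗮ, T x ∈ Uᗮ := by
    intro v hv
    rw [Submodule.mem_orthogonal] at hv ⊢
    intro u hu
    have h1 : (inner ℂ u (T v) : ℂ) = inner ℂ (T u) v := by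
      conv_lhs => rw [← hadj]
      exact ContinuousLinearMap.adjoint_inner_right T u v
    rw [h1]
    exact hv (T u) (hU u hu)
  refine ContinuousLinearMap.ext fun x => ?_
  simp only [ContinuousLinearMap.mul_apply, projOp, ContinuousLinearMap.comp_apply,
    Submodule.subtypeL_apply]
  have hu : T ↑(U.orthogonalProjectionOnto x) ∈ U := hU _ (U.orthogonalProjectionOnto x).2
  have hv : T (x - ↑(U.orthogonalProjectionOnto x)) ∈ Uᗮ :=
    hU' _ (U.sub_starProjection_mem_orthogonal x)
  calc (↑(U.orthogonalProjectionOnto (T x)) : EuclideanSpace ℂ (Fin d))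
      = ↑(U.orthogonalProjectionOnto (T ↑(U.orthogonalProjectionOnto x)
          + T (x - ↑(U.orthogonalProjectionOnto x)))) := by
        rw [← map_add, add_sub_cancel]
    _ = ↑(U.orthogonalProjectionOnto (T ↑(U.orthogonalProjectionOnto x)))
        + ↑(U.orthogonalProjectionOnto (T (x - ↑(U.orthogonalProjectionOnto x)))) := by
        rw [map_add]; rfl
    _ = T ↑(U.orthogonalProjectionOnto x) := by
        rw [show (U.orthogonalProjectionOnto (T ↑(U.orthogonalProjectionOnto x)) : EuclideanSpace ℂ (Fin d)) = _ from U.starProjection_eq_self_iff.mpr hu,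
          Submodule.orthogonalProjectionOnto_apply_of_mem_orthogonal hv]
        simp

/-- The orthogonal projection onto the interaction-free subspace `W_D` commutes with every
spectral projection `P m` of the reference Hamiltonian `H = Σ_m ε_m P_m`, and hence with
`H` itself. -/
theorem projWD_commutes_with_spectral_projections
    (ε : ι → ℝ) (hε : Function.Injective ε)
    (P : ι → (EuclideanSpace ℂ (Fin d) →L[ℂ] EuclideanSpace ℂ (Fin d)))
    (hsa : ∀ m, IsSelfAdjoint (P m)) (hidem : ∀ m, P m * P m = P m)
    (horth : ∀ n m, n ≠ m → P n * P m = 0) (hsum : ∑ m, P m = 1)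
    (D : EuclideanSpace ℂ (Fin d) →L[ℂ] EuclideanSpace ℂ (Fin d)) :
    (∀ m, projOp (WD ε P D) * P m = P m * projOp (WD ε P D)) ∧
    projOp (WD ε P D) * (∑ m, ((ε m : ℝ) : ℂ) • P m)
      = (∑ m, ((ε m : ℝ) : ℂ) • P m) * projOp (WD ε P D) := by
  have memWD : ∀ x, x ∈ WD ε P D ↔ ∀ ω ∈ Bohr ε,
      Dw ε P D ω x = 0 ∧ ContinuousLinearMap.adjoint (Dw ε P D ω) x = 0 := by
    intro x
    simp [WD, Submodule.mem_iInf, Submodule.mem_inf, LinearMap.mem_ker]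
  have hinv : ∀ m, ∀ x ∈ WD ε P D, P m x ∈ WD ε P D := by
    intro m x hx
    rw [memWD] at hx ⊢
    intro ω hω
    obtain ⟨h1, h2⟩ := hx ω hω
    constructor
    · calc Dw ε P D ω (P m x) = (Dw ε P D ω * P m) x := rfl
        _ = ((∑ k, if ε m - ε k = ω then P k else 0) * Dw ε P D ω) x := by
            rw [S_mul_Dw ε P D hε hidem horth m ω]
        _ = 0 := by rw [ContinuousLinearMap.mul_apply, h1, map_zero]
    · have hS2 : IsSelfAdjoint (∑ n, if ε n - ε m = ω then P n else 0) := by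
        refine Finset.sum_induction _ (IsSelfAdjoint : (EuclideanSpace ℂ (Fin d) →L[ℂ] EuclideanSpace ℂ (Fin d)) → Prop) (fun a b ha hb => ContinuousLinearMap.isSelfAdjoint_iff'.mpr (by rw [map_add, ContinuousLinearMap.isSelfAdjoint_iff'.mp ha, ContinuousLinearMap.isSelfAdjoint_iff'.mp hb]))
          (ContinuousLinearMap.isSelfAdjoint_iff'.mpr (by simp)) fun n _ => ?_
        by_cases h : ε n - ε m = ω
        · simpa [h] using hsa n
        · rw [if_neg h]; exact ContinuousLinearMap.isSelfAdjoint_iff'.mpr (by simp)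
      have key : ContinuousLinearMap.adjoint (Dw ε P D ω) * P m
          = (∑ n, if ε n - ε m = ω then P n else 0)
            * ContinuousLinearMap.adjoint (Dw ε P D ω) := by
        have h := congrArg star (Dw_mul_S ε P D hε hidem horth m ω)
        rw [star_mul, star_mul, hS2.star_eq, (hsa m).star_eq] at h
        rw [ContinuousLinearMap.star_eq_adjoint] at h
        exact h.symm
      calc ContinuousLinearMap.adjoint (Dw ε P D ω) (P m x)
          = (ContinuousLinearMap.adjoint (Dw ε P D ω) * P m) x := rfl
        _ = 0 := by rw [key, ContinuousLinearMap.mul_apply, h2, map_zero]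
  have hcomm : ∀ m, projOp (WD ε P D) * P m = P m * projOp (WD ε P D) :=
    fun m => projOp_comm (WD ε P D) (P m) (hsa m) (hinv m)
  refine ⟨hcomm, ?_⟩
  rw [Finset.mul_sum, Finset.sum_mul]
  refine Finset.sum_congr rfl fun m _ => ?_
  rw [mul_smul_comm, smul_mul_assoc, hcomm m]

end WCLT7
end
end
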